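/- arXiv:2403.16208 — 3 statements merged into one kernel-verified Lean document; each statement's English description precedes it below -/
import Mathlib

section
/- Let X be a first-countable topological space and let (f_n) be a sequence of functionals f_n : X → ℝ ∪ {+∞} that Γ-converges to a functional f : X → ℝ ∪ {+∞}. Suppose for each n the point x_n ∈ X is a global minimizer of f_n, and suppose some subsequence (x_{n_k}) converges to a point x ∈ X. Then x is a global minimizer of f, i.e. f(x) = inf_{y ∈ X} f(y). -/
open Filter Topology

/-- The Γ-liminf of a sequence of extended-real-valued functionals:
`Γ-liminf_n f_n(x) = sup_{N open ∋ x} liminf_{n→∞} inf_{y ∈ N} f_n(y)`. -/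
noncomputable def gammaLiminf {X : Type*} [TopologicalSpace X]
    (f : ℕ → X → EReal) (x : X) : EReal :=
  ⨆ (N : Set X) (_ : IsOpen N) (_ : x ∈ N),
    Filter.liminf (fun n => ⨅ y ∈ N, f n y) Filter.atTop

/-- The Γ-limsup of a sequence of extended-real-valued functionals:
`Γ-limsup_n f_n(x) = sup_{N open ∋ x} limsup_{n→∞} inf_{y ∈ N} f_n(y)`. -/
noncomputable def gammaLimsup {X : Type*} [TopologicalSpace X]
    (f : ℕ → X → EReal) (x : X) : EReal :=
  ⨆ (N : Set X) (_ : IsOpen N) (_ : x ∈ N),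
    Filter.limsup (fun n => ⨅ y ∈ N, f n y) Filter.atTop

/-- `(f_n)` Γ-converges to `f` if the Γ-liminf and Γ-limsup both coincide with `f` pointwise. -/
def GammaConvergesTo {X : Type*} [TopologicalSpace X]
    (f : ℕ → X → EReal) (g : X → EReal) : Prop :=
  ∀ x, gammaLiminf f x = g x ∧ gammaLimsup f x = g x

/-- If `(f_n)` Γ-converges to `f` on a first-countable space, `x_n` is a global
minimizer of `f_n` for each `n`, and a subsequence of `(x_n)` converges to `x`,
then `x` is a global minimizer of `f`. -/
theorem stmt0 {X : Type*} [TopologicalSpace X] [FirstCountableTopology X]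
    (f : ℕ → X → EReal) (g : X → EReal)
    (hconv : GammaConvergesTo f g)
    (xs : ℕ → X) (hmin : ∀ n y, f n (xs n) ≤ f n y)
    (φ : ℕ → ℕ) (hφ : StrictMono φ) (x : X)
    (hlim : Tendsto (fun k => xs (φ k)) atTop (𝓝 x)) :
    g x = ⨅ y, g y := by
  set m : EReal := liminf (fun k => f (φ k) (xs (φ k))) atTop with hm
  have hmaple : map φ atTop ≤ (atTop : Filter ℕ) := hφ.tendsto_atTop
  -- m is a lower bound for g
  have hlb : ∀ y, m ≤ g y := by
    intro y
    rw [← (hconv y).2]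
    have h1 : m ≤ limsup (fun n => f n (xs n)) atTop := by
      calc m ≤ limsup (fun k => f (φ k) (xs (φ k))) atTop := liminf_le_limsup
        _ = limsup ((fun n => f n (xs n)) ∘ φ) atTop := rfl
        _ = limsup (fun n => f n (xs n)) (map φ atTop) := limsup_comp _ _ _
        _ ≤ limsup (fun n => f n (xs n)) atTop := limsup_le_limsup_of_le hmaple
    have h2 : limsup (fun n => f n (xs n)) atTop ≤
        limsup (fun n => ⨅ z ∈ (Set.univ : Set X), f n z) atTop := by
      apply limsup_le_limsup (Eventually.of_forall fun n => ?_)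
      exact le_iInf₂ fun z _ => hmin n z
    refine (h1.trans h2).trans ?_
    exact le_iSup_of_le (Set.univ : Set X)
      (le_iSup₂_of_le isOpen_univ (Set.mem_univ y) le_rfl)
  -- g x ≤ m
  have hub : g x ≤ m := by
    rw [← (hconv x).1]
    refine iSup₂_le fun N hN => iSup_le fun hxN => ?_
    have hev : ∀ᶠ k in atTop, (⨅ y ∈ N, f (φ k) y) = f (φ k) (xs (φ k)) := by
      filter_upwards [hlim (hN.mem_nhds hxN)] with k hk
      exact le_antisymm (iInf₂_le (xs (φ k)) hk) (le_iInf₂ fun z _ => hmin _ z)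
    calc liminf (fun n => ⨅ y ∈ N, f n y) atTop
        ≤ liminf (fun n => ⨅ y ∈ N, f n y) (map φ atTop) :=
          liminf_le_liminf_of_le hmaple
      _ = liminf (fun k => ⨅ y ∈ N, f (φ k) y) atTop := (liminf_comp _ _ _).symm
      _ = m := liminf_congr hev
  exact le_antisymm (hub.trans (le_iInf hlb)) (iInf_le _ x)
end

section
/- Let p > 1 and q > 1 satisfy 1/p + 1/q = 1, and let K_q = {(a, b) ∈ ℝ × ℝ^d : a + |b|^q / q ≤ 0}. Then for every t ∈ ℝ and x ∈ ℝ^d, the supremum f_p(t, x) := sup_{(a,b) ∈ K_q} (a·t + b·x) satisfies: f_p(t, x) = (1/p)·|x|^p / t^{p−1} if t > 0; f_p(t, x) = 0 if t = 0 and x = 0; and f_p(t, x) = +∞ if t = 0 and x ≠ 0, or if t < 0. -/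
open Filter

lemma myAux_iSup_eq_top {ι : Sort*} (f : ι → EReal) (h : ∀ M : ℝ, ∃ i, (M : EReal) ≤ f i) :
    iSup f = ⊤ := by
  by_contra hne
  obtain ⟨M, hM1, hM2⟩ := EReal.lt_iff_exists_real_btwn.mp (lt_top_iff_ne_top.mpr hne)
  obtain ⟨i, hi⟩ := h M
  exact absurd (hi.trans (le_iSup f i)) (not_le.mpr hM1)

lemma myAux_young {p q t A X : ℝ} (hpq : p.HolderConjugate q) (ht : 0 < t)
    (hA : 0 ≤ A) (hX : 0 ≤ X) :
    A * X ≤ t * A ^ q / q + X ^ p / (p * t ^ (p - 1)) := by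
  set s := t ^ (q⁻¹) with hs_def
  have hs : 0 < s := Real.rpow_pos_of_pos ht _
  have hq0 : q ≠ 0 := hpq.symm.ne_zero
  have hp0 : p ≠ 0 := hpq.ne_zero
  have hsq : s ^ q = t := by
    rw [hs_def, ← Real.rpow_mul ht.le, inv_mul_cancel₀ hq0, Real.rpow_one]
  have hpq1 : q⁻¹ * p = p - 1 := by
    have h1 : p⁻¹ + q⁻¹ = 1 := hpq.inv_add_inv_eq_one
    field_simp at h1 ⊢
    linear_combination h1
  have hsp : s ^ p = t ^ (p - 1) := by
    rw [hs_def, ← Real.rpow_mul ht.le, hpq1]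
  have h := Real.young_inequality_of_nonneg (div_nonneg hX hs.le) (mul_nonneg hs.le hA) hpq
  have h1 : X / s * (s * A) = A * X := by field_simp
  have h2 : (X / s) ^ p = X ^ p / t ^ (p - 1) := by
    rw [Real.div_rpow hX hs.le, hsp]
  have h3 : (s * A) ^ q = t * A ^ q := by
    rw [Real.mul_rpow hs.le hA, hsq]
  rw [h1, h2, h3] at h
  calc A * X ≤ X ^ p / t ^ (p - 1) / p + t * A ^ q / q := h
    _ = t * A ^ q / q + X ^ p / (p * t ^ (p - 1)) := by
        rw [div_div]; ring_nf


/-- `f_p(t,x) = sup_{(a,b) ∈ K_q} (a·t + b·x)`, where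
`K_q = {(a,b) ∈ ℝ × ℝ^d : a + |b|^q/q ≤ 0}`; the supremum is taken in `ℝ ∪ {+∞}`. -/
noncomputable def fBB (d : ℕ) (q : ℝ) (t : ℝ) (x : EuclideanSpace ℝ (Fin d)) : EReal :=
  ⨆ ab : {ab : ℝ × EuclideanSpace ℝ (Fin d) // ab.1 + ‖ab.2‖ ^ q / q ≤ 0},
    (((ab : ℝ × EuclideanSpace ℝ (Fin d)).1 * t +
        (inner ℝ (ab : ℝ × EuclideanSpace ℝ (Fin d)).2 x : ℝ) : ℝ) : EReal)

/-- Pointwise characterization of the Benamou–Brenier integrand: for conjugate exponents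
`p, q > 1`, the supremum `f_p(t,x) = sup_{(a,b) ∈ K_q}(a t + b·x)` equals
`(1/p)|x|^p / t^{p−1}` for `t > 0`, equals `0` for `t = 0, x = 0`, and equals `+∞`
when `t = 0, x ≠ 0` or `t < 0`. -/
theorem stmt3 (d : ℕ) (p q : ℝ) (hp : 1 < p) (hq : 1 < q) (hpq : 1 / p + 1 / q = 1)
    (t : ℝ) (x : EuclideanSpace ℝ (Fin d)) :
    (0 < t → fBB d q t x = (((1 / p) * ‖x‖ ^ p / t ^ (p - 1) : ℝ) : EReal)) ∧
    (t = 0 → x = 0 → fBB d q t x = 0) ∧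
    (((t = 0 ∧ x ≠ 0) ∨ t < 0) → fBB d q t x = ⊤) := by
  have hp0 : p ≠ 0 := by positivity
  have hq0 : q ≠ 0 := by positivity
  have hcon : p.HolderConjugate q := Real.holderConjugate_iff.mpr ⟨hp, by rw [← one_div, ← one_div]; exact hpq⟩
  refine ⟨?_, ?_, ?_⟩
  · -- case 0 < t
    intro ht
    have htp : (0:ℝ) < t ^ (p - 1) := Real.rpow_pos_of_pos ht _
    apply le_antisymm
    · apply iSup_le
      rintro ⟨⟨a, b⟩, hab⟩
      simp only [EReal.coe_le_coe_iff]
      have h1 : (inner ℝ b x : ℝ) ≤ ‖b‖ * ‖x‖ := real_inner_le_norm b x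
      have h2 := myAux_young hcon ht (norm_nonneg b) (norm_nonneg x)
      have h3 : a * t ≤ -(‖b‖ ^ q / q) * t := by
        apply mul_le_mul_of_nonneg_right _ ht.le
        simp only [Prod.fst, Prod.snd] at hab
        linarith
      have h4 : ‖x‖ ^ p / (p * t ^ (p - 1)) = 1 / p * ‖x‖ ^ p / t ^ (p - 1) := by
        field_simp
      have h3' : a * t ≤ -(t * ‖b‖ ^ q / q) := le_trans h3 (le_of_eq (by ring))
      calc a * t + (inner ℝ b x : ℝ)
          ≤ -(t * ‖b‖ ^ q / q) + ‖b‖ * ‖x‖ := add_le_add h3' h1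
        _ ≤ -(t * ‖b‖ ^ q / q) + (t * ‖b‖ ^ q / q + ‖x‖ ^ p / (p * t ^ (p - 1))) :=
            add_le_add_right h2 _
        _ = ‖x‖ ^ p / (p * t ^ (p - 1)) := neg_add_cancel_left _ _
        _ = 1 / p * ‖x‖ ^ p / t ^ (p - 1) := h4
    · by_cases hx : x = 0
      · subst hx
        have hval : ((1 / p) * ‖(0 : EuclideanSpace ℝ (Fin d))‖ ^ p / t ^ (p - 1) : ℝ) = 0 := by
          simp [Real.zero_rpow hp0]
        rw [hval]
        refine le_iSup_of_le ⟨(0, 0), by simp [Real.zero_rpow hq0]⟩ ?_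
        simp
      · have hx' : (0:ℝ) < ‖x‖ := norm_pos_iff.mpr hx
        set r : ℝ := (‖x‖ / t) ^ (p - 1) with hr_def
        have hr : 0 ≤ r := Real.rpow_nonneg (div_nonneg (norm_nonneg x) ht.le) _
        have hnb : ‖(r / ‖x‖) • x‖ = r := by
          rw [norm_smul, Real.norm_eq_abs, abs_of_nonneg (div_nonneg hr hx'.le),
            div_mul_cancel₀ _ hx'.ne']
        have hpg : (p - 1) * q = p := by
          have h1 : p⁻¹ + q⁻¹ = 1 := hcon.inv_add_inv_eq_one
          field_simp at h1
          linarith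
        have hrq : r ^ q = ‖x‖ ^ p / t ^ p := by
          rw [hr_def, ← Real.rpow_mul (div_nonneg (norm_nonneg x) ht.le), hpg,
            Real.div_rpow (norm_nonneg x) ht.le]
        have htp2 : t ^ p = t ^ (p - 1) * t := by
          rw [← Real.rpow_add_one ht.ne', sub_add_cancel]
        have e1 : r ^ q * t = ‖x‖ ^ p / t ^ (p - 1) := by
          rw [hrq, htp2]
          field_simp
        have hrd : r = ‖x‖ ^ (p - 1) / t ^ (p - 1) := by
          rw [hr_def, Real.div_rpow (norm_nonneg x) ht.le]
        have hxp : ‖x‖ ^ p = ‖x‖ ^ (p - 1) * ‖x‖ := by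
          rw [← Real.rpow_add_one hx'.ne', sub_add_cancel]
        have e2 : r * ‖x‖ = ‖x‖ ^ p / t ^ (p - 1) := by
          rw [hrd, hxp]; ring
        refine le_iSup_of_le ⟨(-(r ^ q / q), (r / ‖x‖) • x), ?_⟩ ?_
        · simp only [hnb]
          simp
        · simp only [EReal.coe_le_coe_iff]
          apply le_of_eq
          rw [real_inner_smul_left, real_inner_self_eq_norm_mul_norm]
          have h5 : r / ‖x‖ * (‖x‖ * ‖x‖) = r * ‖x‖ := by
            field_simp
          rw [h5]
          linear_combination (1/q) * e1 - e2 + (‖x‖ ^ p / t ^ (p - 1)) * hpq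
  · -- case t = 0, x = 0
    rintro rfl rfl
    apply le_antisymm
    · apply iSup_le
      rintro ⟨⟨a, b⟩, hab⟩
      simp
    · refine le_iSup_of_le ⟨(0, 0), by simp [Real.zero_rpow hq0]⟩ ?_
      simp
  · -- case top
    rintro (⟨rfl, hx⟩ | ht)
    · apply myAux_iSup_eq_top
      intro M
      have hx' : (0:ℝ) < ‖x‖ := norm_pos_iff.mpr hx
      set c : ℝ := max (M / (‖x‖ * ‖x‖)) 0 with hc
      refine ⟨⟨(-(‖c • x‖ ^ q / q), c • x), by simp⟩, ?_⟩
      simp only [mul_zero, zero_add, EReal.coe_le_coe_iff]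
      rw [real_inner_smul_left, real_inner_self_eq_norm_mul_norm]
      calc M = M / (‖x‖ * ‖x‖) * (‖x‖ * ‖x‖) := by field_simp
        _ ≤ c * (‖x‖ * ‖x‖) :=
            mul_le_mul_of_nonneg_right (le_max_left _ _) (by positivity)
    · apply myAux_iSup_eq_top
      intro M
      refine ⟨⟨(min (M / t) 0, 0), by simp [Real.zero_rpow hq0]⟩, ?_⟩
      simp only [inner_zero_left, add_zero, EReal.coe_le_coe_iff]
      have h := mul_le_mul_of_nonpos_right (min_le_left (M / t) 0) ht.le
      rw [div_mul_cancel₀ _ ht.ne] at h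
      exact h
end

section
/- Let D ⊂ ℝ^d be a compact set, Θ ⊂ ℝ^{d₁} a compact set, and F : Θ × D → ℝ a continuous function such that there exists L ≥ 0 with F(θ, ·) L-Lipschitz on D for every θ ∈ Θ. Let (μ_N) and μ be Borel probability measures on D with W₁(μ_N, μ) → 0, and for each N let θ_N ∈ Θ be a global minimizer of θ ↦ ∫_D F(θ, x) μ_N(dx) over Θ. Then lim_{N→∞} ∫_D F(θ_N, x) μ_N(dx) = min_{θ ∈ Θ} ∫_D F(θ, x) μ(dx), and every cluster point θ* of the sequence (θ_N) is a global minimizer of θ ↦ ∫_D F(θ, x) μ(dx) over Θ. -/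
open Filter MeasureTheory Topology
open scoped ENNReal

/-- The Wasserstein-1 distance between two Borel measures, defined as the infimum
of `∫ |x−y| dγ` over all couplings `γ` (probability measures on the product with
the given marginals). -/
noncomputable def W1 {E : Type*} [MeasurableSpace E] [PseudoEMetricSpace E]
    (μ ν : MeasureTheory.Measure E) : ℝ≥0∞ :=
  ⨅ (γ : MeasureTheory.Measure (E × E)) (_ : MeasureTheory.IsProbabilityMeasure γ)
    (_ : γ.map Prod.fst = μ) (_ : γ.map Prod.snd = ν),
    ∫⁻ p, edist p.1 p.2 ∂γ

lemma lemA {d : ℕ} {D : Set (EuclideanSpace ℝ (Fin d))} (hDm : MeasurableSet D)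
    {f : EuclideanSpace ℝ (Fin d) → ℝ} (hf : ContinuousOn f D)
    {M : ℝ} (hM : ∀ x ∈ D, |f x| ≤ M)
    {L : ℝ} (hL : 0 ≤ L) (hlip : ∀ x ∈ D, ∀ y ∈ D, |f x - f y| ≤ L * ‖x - y‖)
    {μ ν : MeasureTheory.Measure (EuclideanSpace ℝ (Fin d))}
    (hμ : μ Dᶜ = 0) (hν : ν Dᶜ = 0)
    {γ : MeasureTheory.Measure (EuclideanSpace ℝ (Fin d) × EuclideanSpace ℝ (Fin d))}
    [MeasureTheory.IsProbabilityMeasure γ]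
    (h1 : γ.map Prod.fst = μ) (h2 : γ.map Prod.snd = ν)
    {ε : ℝ} (hε : 0 ≤ ε)
    (hee : ∫⁻ p, edist p.1 p.2 ∂γ ≤ ENNReal.ofReal ε) :
    |(∫ x, f x ∂μ) - ∫ x, f x ∂ν| ≤ L * ε := by
  have hresμ : μ.restrict D = μ :=
    Measure.restrict_eq_self_of_ae_mem (ae_iff.2 (by exact hμ))
  have hresν : ν.restrict D = ν :=
    Measure.restrict_eq_self_of_ae_mem (ae_iff.2 (by exact hν))
  have hfmμ : AEStronglyMeasurable f μ := by
    rw [← hresμ]; exact hf.aestronglyMeasurable hDm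
  have hfmν : AEStronglyMeasurable f ν := by
    rw [← hresν]; exact hf.aestronglyMeasurable hDm
  have ha : γ (Prod.fst ⁻¹' Dᶜ) = 0 := by
    rw [← Measure.map_apply measurable_fst hDm.compl, h1]; exact hμ
  have hb : γ (Prod.snd ⁻¹' Dᶜ) = 0 := by
    rw [← Measure.map_apply measurable_snd hDm.compl, h2]; exact hν
  have haeD : ∀ᵐ p ∂γ, p.1 ∈ D ∧ p.2 ∈ D := by
    rw [ae_iff]
    refine measure_mono_null (fun p hp => ?_) (measure_union_null ha hb)
    simp only [Set.mem_setOf_eq, not_and_or] at hp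
    simpa using hp
  have hsm1 : AEStronglyMeasurable (fun p => f p.1) γ :=
    (h1 ▸ hfmμ : AEStronglyMeasurable f (γ.map Prod.fst)).comp_aemeasurable
      measurable_fst.aemeasurable
  have hsm2 : AEStronglyMeasurable (fun p => f p.2) γ :=
    (h2 ▸ hfmν : AEStronglyMeasurable f (γ.map Prod.snd)).comp_aemeasurable
      measurable_snd.aemeasurable
  have gfst : Integrable (fun p => f p.1) γ := by
    refine (integrable_const M).mono' hsm1 ?_
    exact haeD.mono fun p hp => by simpa [Real.norm_eq_abs] using hM _ hp.1
  have gsnd : Integrable (fun p => f p.2) γ := by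
    refine (integrable_const M).mono' hsm2 ?_
    exact haeD.mono fun p hp => by simpa [Real.norm_eq_abs] using hM _ hp.2
  have hi1 : ∫ x, f x ∂μ = ∫ p, f p.1 ∂γ := by
    rw [← h1, integral_map measurable_fst.aemeasurable (h1 ▸ hfmμ)]
  have hi2 : ∫ x, f x ∂ν = ∫ p, f p.2 ∂γ := by
    rw [← h2, integral_map measurable_snd.aemeasurable (h2 ▸ hfmν)]
  have habs : ∫ p, |f p.1 - f p.2| ∂γ ≤ L * ε := by
    rw [integral_eq_lintegral_of_nonneg_ae (Eventually.of_forall fun p => abs_nonneg _)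
      (by simpa [Real.norm_eq_abs] using (hsm1.sub hsm2).norm)]
    refine ENNReal.toReal_le_of_le_ofReal (mul_nonneg hL hε) ?_
    calc ∫⁻ p, ENNReal.ofReal |f p.1 - f p.2| ∂γ
        ≤ ∫⁻ p, ENNReal.ofReal L * edist p.1 p.2 ∂γ := by
          refine lintegral_mono_ae (haeD.mono fun p hp => ?_)
          rw [edist_dist, dist_eq_norm, ← ENNReal.ofReal_mul hL]
          exact ENNReal.ofReal_le_ofReal (hlip _ hp.1 _ hp.2)
      _ = ENNReal.ofReal L * ∫⁻ p, edist p.1 p.2 ∂γ :=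
          lintegral_const_mul' _ _ ENNReal.ofReal_ne_top
      _ ≤ ENNReal.ofReal L * ENNReal.ofReal ε := mul_le_mul_right hee _
      _ = ENNReal.ofReal (L * ε) := (ENNReal.ofReal_mul hL).symm
  calc |(∫ x, f x ∂μ) - ∫ x, f x ∂ν| = |∫ p, (f p.1 - f p.2) ∂γ| := by
        rw [hi1, hi2, integral_sub gfst gsnd]
    _ ≤ ∫ p, |f p.1 - f p.2| ∂γ := by
        simpa [Real.norm_eq_abs] using
          norm_integral_le_integral_norm (μ := γ) (fun p => f p.1 - f p.2)
    _ ≤ L * ε := habs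

/-- Convergence of empirical risk minimizers: if `F : Θ × D → ℝ` is continuous on the
compact sets `Θ × D`, uniformly `L`-Lipschitz in `x`, `W₁(μ_N, μ) → 0`, and `θ_N`
minimizes `θ ↦ ∫ F(θ,x) μ_N(dx)` over `Θ`, then the optimal values converge to
`min_{θ ∈ Θ} ∫ F(θ,x) μ(dx)` and every cluster point of `(θ_N)` is a global minimizer
of `θ ↦ ∫ F(θ,x) μ(dx)` over `Θ`. -/
theorem stmt16 (d d₁ : ℕ)
    (D : Set (EuclideanSpace ℝ (Fin d))) (hD : IsCompact D)
    (Θ : Set (EuclideanSpace ℝ (Fin d₁))) (hΘ : IsCompact Θ)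
    (F : EuclideanSpace ℝ (Fin d₁) → EuclideanSpace ℝ (Fin d) → ℝ)
    (hFcont : ContinuousOn
      (fun p : EuclideanSpace ℝ (Fin d₁) × EuclideanSpace ℝ (Fin d) => F p.1 p.2)
      (Θ ×ˢ D))
    (L : ℝ) (hL : 0 ≤ L)
    (hFlip : ∀ θ ∈ Θ, ∀ x ∈ D, ∀ y ∈ D, |F θ x - F θ y| ≤ L * ‖x - y‖)
    (μs : ℕ → MeasureTheory.Measure (EuclideanSpace ℝ (Fin d)))
    (μ : MeasureTheory.Measure (EuclideanSpace ℝ (Fin d)))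
    [∀ N, MeasureTheory.IsProbabilityMeasure (μs N)]
    [MeasureTheory.IsProbabilityMeasure μ]
    (hμs : ∀ N, μs N Dᶜ = 0) (hμ : μ Dᶜ = 0)
    (hW : Tendsto (fun N => W1 (μs N) μ) atTop (𝓝 0))
    (θN : ℕ → EuclideanSpace ℝ (Fin d₁)) (hθN : ∀ N, θN N ∈ Θ)
    (hminN : ∀ N, ∀ θ ∈ Θ, (∫ x, F (θN N) x ∂(μs N)) ≤ ∫ x, F θ x ∂(μs N)) :
    Tendsto (fun N => ∫ x, F (θN N) x ∂(μs N)) atTop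
      (𝓝 (⨅ θ : Θ, ∫ x, F θ x ∂μ)) ∧
    ∀ θstar : EuclideanSpace ℝ (Fin d₁), MapClusterPt θstar atTop θN →
      θstar ∈ Θ ∧ ∀ θ ∈ Θ, (∫ x, F θstar x ∂μ) ≤ ∫ x, F θ x ∂μ := by
  -- bound M
  obtain ⟨M, hM⟩ := (hΘ.prod hD).exists_bound_of_continuousOn hFcont
  have hM' : ∀ θ ∈ Θ, ∀ x ∈ D, |F θ x| ≤ M := fun θ hθ x hx => by
    simpa [Real.norm_eq_abs] using hM (θ, x) ⟨hθ, hx⟩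
  -- slice continuity
  have hslice : ∀ θ ∈ Θ, ContinuousOn (fun x => F θ x) D := by
    intro θ hθ
    exact hFcont.comp ((continuous_const.prodMk continuous_id).continuousOn)
      (fun x hx => ⟨hθ, hx⟩)
  set gl : EuclideanSpace ℝ (Fin d₁) → ℝ := fun θ => ∫ x, F θ x ∂μ with hgl
  -- key uniform estimate
  have hkey : ∀ ε : ℝ, 0 < ε → ∀ᶠ N in atTop, ∀ θ ∈ Θ,
      |(∫ x, F θ x ∂(μs N)) - gl θ| ≤ L * ε := by
    intro ε hε
    have h0 : (0 : ℝ≥0∞) < ENNReal.ofReal ε := ENNReal.ofReal_pos.2 hε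
    filter_upwards [hW.eventually_lt_const h0] with N hN
    rw [W1] at hN
    obtain ⟨γ, hN⟩ := iInf_lt_iff.1 hN
    obtain ⟨hγp, hN⟩ := iInf_lt_iff.1 hN
    obtain ⟨hγ1, hN⟩ := iInf_lt_iff.1 hN
    obtain ⟨hγ2, hN⟩ := iInf_lt_iff.1 hN
    haveI := hγp
    intro θ hθ
    exact lemA hD.measurableSet (hslice θ hθ) (hM' θ hθ) hL (hFlip θ hθ)
      (hμs N) hμ hγ1 hγ2 hε.le hN.le
  -- continuity of gl on Θ
  have haeμ : ∀ᵐ x ∂μ, x ∈ D := ae_iff.2 (by exact hμ)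
  have hresμ : μ.restrict D = μ := Measure.restrict_eq_self_of_ae_mem haeμ
  have hIntμ : ∀ θ ∈ Θ, Integrable (F θ) μ := by
    intro θ hθ
    have hsm : AEStronglyMeasurable (F θ) μ := by
      rw [← hresμ]; exact (hslice θ hθ).aestronglyMeasurable hD.measurableSet
    refine (integrable_const M).mono' hsm ?_
    exact haeμ.mono fun x hx => by simpa [Real.norm_eq_abs] using hM' θ hθ x hx
  have hglc : ContinuousOn gl Θ := by
    have hUC := (hΘ.prod hD).uniformContinuousOn_of_continuous hFcont
    rw [Metric.uniformContinuousOn_iff] at hUC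
    rw [Metric.continuousOn_iff]
    intro θ₀ hθ₀ ε hε
    obtain ⟨δ, hδ, hd⟩ := hUC (ε / 2) (by linarith)
    refine ⟨δ, hδ, fun θ hθ hdist => ?_⟩
    have hb : ∀ᵐ x ∂μ, ‖F θ x - F θ₀ x‖ ≤ ε / 2 := by
      refine haeμ.mono fun x hx => ?_
      have := hd (θ, x) ⟨hθ, hx⟩ (θ₀, x) ⟨hθ₀, hx⟩
        (by simpa [Prod.dist_eq, max_lt_iff, hδ] using hdist)
      simpa [Real.dist_eq, Real.norm_eq_abs] using this.le
    have : ‖(∫ x, F θ x ∂μ) - ∫ x, F θ₀ x ∂μ‖ ≤ ε / 2 := by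
      rw [← integral_sub (hIntμ θ hθ) (hIntμ θ₀ hθ₀)]
      calc ‖∫ x, (F θ x - F θ₀ x) ∂μ‖ ≤ ε / 2 * (μ Set.univ).toReal :=
            norm_integral_le_of_norm_le_const hb
        _ = ε / 2 := by simp
    rw [Real.dist_eq]
    calc |gl θ - gl θ₀| ≤ ε / 2 := by simpa [hgl, Real.norm_eq_abs] using this
      _ < ε := by linarith
  -- minimizer of gl over Θ
  obtain ⟨θm, hθmΘ, hθm⟩ := hΘ.exists_isMinOn ⟨θN 0, hθN 0⟩ hglc
  have hθm' : ∀ θ ∈ Θ, gl θm ≤ gl θ := fun θ hθ => hθm hθ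
  haveI : Nonempty ↑Θ := ⟨⟨θN 0, hθN 0⟩⟩
  have hm : (⨅ θ : Θ, ∫ x, F θ x ∂μ) = gl θm := by
    apply le_antisymm
    · refine ciInf_le ?_ (⟨θm, hθmΘ⟩ : Θ)
      refine ⟨gl θm, ?_⟩
      rintro y ⟨θ, rfl⟩
      exact hθm' θ.1 θ.2
    · exact le_ciInf fun θ => hθm' θ.1 θ.2
  -- convergence of optimal values
  have hconv : Tendsto (fun N => ∫ x, F (θN N) x ∂(μs N)) atTop (𝓝 (gl θm)) := by
    rw [Metric.tendsto_nhds]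
    intro ε' hε'
    have hε : 0 < ε' / (2 * (L + 1)) := by positivity
    have hc : (0:ℝ) < 2 * (L + 1) := by linarith
    have hL2 : 2 * (L * (ε' / (2 * (L + 1)))) < ε' := by
      have he : 2 * (L * (ε' / (2 * (L + 1)))) = 2 * L * ε' / (2 * (L + 1)) := by ring
      rw [he, div_lt_iff₀ hc]
      nlinarith [hε']
    have hLnn : 0 ≤ L * (ε' / (2 * (L + 1))) := mul_nonneg hL hε.le
    filter_upwards [hkey _ hε] with N hN
    have h1' := abs_le.1 (hN (θN N) (hθN N))
    have h2' := abs_le.1 (hN θm hθmΘ)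
    have h3 := hminN N θm hθmΘ
    have h4 := hθm' (θN N) (hθN N)
    rw [Real.dist_eq, abs_lt]
    constructor <;> linarith [h1'.1, h1'.2, h2'.1, h2'.2]
  have hconvgl : Tendsto (fun N => gl (θN N)) atTop (𝓝 (gl θm)) := by
    rw [Metric.tendsto_nhds]
    intro ε' hε'
    have hε : 0 < ε' / (2 * (L + 1)) := by positivity
    have hc : (0:ℝ) < 2 * (L + 1) := by linarith
    have hL2 : 2 * (L * (ε' / (2 * (L + 1)))) < ε' := by
      have he : 2 * (L * (ε' / (2 * (L + 1)))) = 2 * L * ε' / (2 * (L + 1)) := by ring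
      rw [he, div_lt_iff₀ hc]
      nlinarith [hε']
    have hLnn : 0 ≤ L * (ε' / (2 * (L + 1))) := mul_nonneg hL hε.le
    filter_upwards [hkey _ hε] with N hN
    have h1' := abs_le.1 (hN (θN N) (hθN N))
    have h2' := abs_le.1 (hN θm hθmΘ)
    have h3 := hminN N θm hθmΘ
    have h4 := hθm' (θN N) (hθN N)
    rw [Real.dist_eq, abs_lt]
    constructor <;> linarith [h1'.1, h1'.2, h2'.1, h2'.2]
  refine ⟨hm ▸ hconv, fun θstar hcl => ?_⟩
  obtain ⟨ψ, hψ, hψt⟩ := TopologicalSpace.FirstCountableTopology.tendsto_subseq hcl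
  have hmem : θstar ∈ Θ :=
    hΘ.isClosed.mem_of_tendsto hψt (Eventually.of_forall fun k => hθN (ψ k))
  have ht1 : Tendsto (fun k => gl (θN (ψ k))) atTop (𝓝 (gl θm)) :=
    hconvgl.comp hψ.tendsto_atTop
  have ht2 : Tendsto (fun k => gl (θN (ψ k))) atTop (𝓝 (gl θstar)) := by
    have := (hglc θstar hmem).tendsto
    exact this.comp (tendsto_nhdsWithin_iff.2
      ⟨hψt, Eventually.of_forall fun k => hθN (ψ k)⟩)
  have heq : gl θstar = gl θm := tendsto_nhds_unique ht2 ht1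
  exact ⟨hmem, fun θ hθ => heq.le.trans (hθm' θ hθ)⟩
end
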